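/- arXiv:2204.04780 — 8 statements merged into one kernel-verified Lean document; each statement's English description precedes it below -/
import Mathlib

section
/- Let S be a finite type, h a natural number, P : ℕ → S → S → ℝ a time-dependent transition kernel with P k s s' ≥ 0 and ∑_{s'} P k s s' = 1 for every k < h and s ∈ S, and u : ℕ → S → ℝ a nonnegative per-step utility. Define the value function v : ℕ → S → ℝ by v h s = 0 and, for k < h, v k s = u k s + ∑_{s' ∈ S} P k s s' · v (k+1) s'. Then for every initial state s₀, the value v 0 s₀ equals the expected cumulative utility over trajectories: v 0 s₀ = ∑_{τ : Fin (h+1) → S, τ 0 = s₀} (∏_{k=0}^{h-1} P k (τ k) (τ (k+1))) · (∑_{k=0}^{h-1} u k (τ k)). -/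

lemma sum_cons_eq {S : Type*} [Fintype S] [DecidableEq S] {n : ℕ} (s : S)
    (f : (Fin (n+1) → S) → ℝ) :
    ∑ τ ∈ Finset.univ.filter (fun τ : Fin (n+1) → S => τ 0 = s), f τ
      = ∑ σ : Fin n → S, f (Fin.cons s σ) := by
  apply Finset.sum_nbij' (fun τ => Fin.tail τ) (fun σ => Fin.cons s σ)
  · intro τ hτ; simp
  · intro σ hσ; simp
  · intro τ hτ
    simp only [Finset.mem_filter] at hτ
    rw [← hτ.2]; exact Fin.cons_self_tail τ
  · intro σ hσ; simp [Fin.tail_cons]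
  · intro τ hτ
    simp only [Finset.mem_filter] at hτ
    rw [← hτ.2]; rw [Fin.cons_self_tail τ]

lemma prob_sum {S : Type*} [Fintype S] [DecidableEq S] {h : ℕ}
    (P : ℕ → S → S → ℝ)
    (hP_sum : ∀ k < h, ∀ s : S, ∑ s' : S, P k s s' = 1) :
    ∀ n t, t + n ≤ h → ∀ s : S,
      ∑ τ ∈ Finset.univ.filter (fun τ : Fin (n+1) → S => τ 0 = s),
        ∏ k : Fin n, P (t + k) (τ k.castSucc) (τ k.succ) = 1 := by
  intro n
  induction n with
  | zero =>
    intro t ht s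
    rw [sum_cons_eq]
    simp
  | succ n ih =>
    intro t ht s
    have htn : t + 1 + n ≤ h := by omega
    have hth : t < h := by omega
    rw [sum_cons_eq]
    simp only [Fin.prod_univ_succ, Fin.castSucc_zero, Fin.cons_zero, Fin.cons_succ,
      Fin.val_zero, Nat.add_zero, Fin.val_succ, ← Fin.succ_castSucc]
    rw [← Finset.sum_fiberwise Finset.univ (fun σ : Fin (n+1) → S => σ 0)]
    have key : ∀ s' : S,
        (∑ σ ∈ Finset.univ.filter (fun σ : Fin (n+1) → S => σ 0 = s'),
          P t s (σ 0) * ∏ j : Fin n, P (t + (j + 1)) (σ j.castSucc) (σ j.succ))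
        = P t s s' := by
      intro s'
      have ihs : (∑ σ ∈ Finset.univ.filter (fun σ : Fin (n+1) → S => σ 0 = s'),
          ∏ j : Fin n, P (t + (j + 1)) (σ j.castSucc) (σ j.succ)) = 1 := by
        rw [← ih (t+1) htn s']
        refine Finset.sum_congr rfl fun σ _ => Finset.prod_congr rfl fun j _ => ?_
        congr 1; omega
      rw [Finset.sum_congr rfl (fun σ hσ => by
        rw [(Finset.mem_filter.mp hσ).2])]
      rw [← Finset.mul_sum, ihs, mul_one]
    rw [Finset.sum_congr rfl (fun s' _ => key s'), hP_sum t hth s]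

lemma value_aux {S : Type*} [Fintype S] [DecidableEq S] {h : ℕ}
    (P : ℕ → S → S → ℝ) (u : ℕ → S → ℝ) (v : ℕ → S → ℝ)
    (hP_sum : ∀ k < h, ∀ s : S, ∑ s' : S, P k s s' = 1)
    (hv_h : ∀ s : S, v h s = 0)
    (hv : ∀ k < h, ∀ s : S, v k s = u k s + ∑ s' : S, P k s s' * v (k + 1) s') :
    ∀ n t, t + n = h → ∀ s : S,
      v t s = ∑ τ ∈ Finset.univ.filter (fun τ : Fin (n+1) → S => τ 0 = s),
        (∏ k : Fin n, P (t + k) (τ k.castSucc) (τ k.succ)) *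
          (∑ k : Fin n, u (t + k) (τ k.castSucc)) := by
  intro n
  induction n with
  | zero =>
    intro t ht s
    obtain rfl : t = h := by omega
    rw [sum_cons_eq]
    simpa using hv_h s
  | succ n ih =>
    intro t ht s
    have htn : t + 1 + n = h := by omega
    have hth : t < h := by omega
    rw [sum_cons_eq]
    simp only [Fin.prod_univ_succ, Fin.sum_univ_succ, Fin.castSucc_zero, Fin.cons_zero,
      Fin.cons_succ, Fin.val_zero, Nat.add_zero, Fin.val_succ, ← Fin.succ_castSucc]
    rw [← Finset.sum_fiberwise Finset.univ (fun σ : Fin (n+1) → S => σ 0)]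
    have key : ∀ s' : S,
        (∑ σ ∈ Finset.univ.filter (fun σ : Fin (n+1) → S => σ 0 = s'),
          (P t s (σ 0) * ∏ j : Fin n, P (t + (j + 1)) (σ j.castSucc) (σ j.succ)) *
            (u t s + ∑ j : Fin n, u (t + (j + 1)) (σ j.castSucc)))
        = P t s s' * (u t s + v (t + 1) s') := by
      intro s'
      have hps : (∑ σ ∈ Finset.univ.filter (fun σ : Fin (n+1) → S => σ 0 = s'),
          ∏ j : Fin n, P (t + (j + 1)) (σ j.castSucc) (σ j.succ)) = 1 := by
        rw [← prob_sum P hP_sum n (t+1) (by omega) s']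
        refine Finset.sum_congr rfl fun σ _ => Finset.prod_congr rfl fun j _ => ?_
        congr 1; omega
      have hvs : v (t + 1) s' = ∑ σ ∈ Finset.univ.filter (fun σ : Fin (n+1) → S => σ 0 = s'),
          (∏ j : Fin n, P (t + (j + 1)) (σ j.castSucc) (σ j.succ)) *
            (∑ j : Fin n, u (t + (j + 1)) (σ j.castSucc)) := by
        rw [ih (t+1) htn s']
        refine Finset.sum_congr rfl fun σ _ => ?_
        congr 1
        · exact Finset.prod_congr rfl fun j _ => by congr 1; omega
        · exact Finset.sum_congr rfl fun j _ => by congr 1; omega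
      calc (∑ σ ∈ Finset.univ.filter (fun σ : Fin (n+1) → S => σ 0 = s'),
          (P t s (σ 0) * ∏ j : Fin n, P (t + (j + 1)) (σ j.castSucc) (σ j.succ)) *
            (u t s + ∑ j : Fin n, u (t + (j + 1)) (σ j.castSucc)))
          = ∑ σ ∈ Finset.univ.filter (fun σ : Fin (n+1) → S => σ 0 = s'),
            P t s s' * ((∏ j : Fin n, P (t + (j + 1)) (σ j.castSucc) (σ j.succ)) * u t s
              + (∏ j : Fin n, P (t + (j + 1)) (σ j.castSucc) (σ j.succ)) *
                (∑ j : Fin n, u (t + (j + 1)) (σ j.castSucc))) := by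
            refine Finset.sum_congr rfl fun σ hσ => ?_
            rw [(Finset.mem_filter.mp hσ).2]; ring
        _ = P t s s' * ((∑ σ ∈ Finset.univ.filter (fun σ : Fin (n+1) → S => σ 0 = s'),
              (∏ j : Fin n, P (t + (j + 1)) (σ j.castSucc) (σ j.succ)) * u t s)
            + ∑ σ ∈ Finset.univ.filter (fun σ : Fin (n+1) → S => σ 0 = s'),
              (∏ j : Fin n, P (t + (j + 1)) (σ j.castSucc) (σ j.succ)) *
                (∑ j : Fin n, u (t + (j + 1)) (σ j.castSucc))) := by
            rw [← Finset.sum_add_distrib, Finset.mul_sum]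
        _ = P t s s' * (u t s + v (t + 1) s') := by
            rw [← Finset.sum_mul, hps, one_mul, hvs]
    rw [Finset.sum_congr rfl (fun s' _ => key s')]
    have : ∑ s' : S, P t s s' * (u t s + v (t + 1) s')
        = (∑ s' : S, P t s s') * u t s + ∑ s' : S, P t s s' * v (t + 1) s' := by
      rw [Finset.sum_mul, ← Finset.sum_add_distrib]
      exact Finset.sum_congr rfl fun s' _ => by ring
    rw [this, hP_sum t hth s, one_mul, hv t hth s]


/-- the Bellman value function of a finite-horizon MDP (under a fixed
policy, inducing time-dependent kernel `P` and per-step utility `u`) equals the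
expected cumulative utility over trajectories. -/
theorem value_eq_expected_cumulative_utility
    (S : Type*) [Fintype S] [DecidableEq S] (h : ℕ)
    (P : ℕ → S → S → ℝ) (u : ℕ → S → ℝ)
    (hP_nonneg : ∀ k < h, ∀ s s' : S, 0 ≤ P k s s')
    (hP_sum : ∀ k < h, ∀ s : S, ∑ s' : S, P k s s' = 1)
    (hu_nonneg : ∀ k < h, ∀ s : S, 0 ≤ u k s)
    (v : ℕ → S → ℝ)
    (hv_h : ∀ s : S, v h s = 0)
    (hv : ∀ k < h, ∀ s : S, v k s = u k s + ∑ s' : S, P k s s' * v (k + 1) s')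
    (s₀ : S) :
    v 0 s₀ =
      ∑ τ ∈ Finset.univ.filter (fun τ : Fin (h + 1) → S => τ 0 = s₀),
        (∏ k : Fin h, P k.val (τ k.castSucc) (τ k.succ)) *
          (∑ k : Fin h, u k.val (τ k.castSucc)) := by
  rw [value_aux P u v hP_sum hv_h hv h 0 (by omega) s₀]
  simp only [Nat.zero_add]
end

section
/- Let S be a finite type, h a natural number, P : ℕ → S → S → ℝ a time-dependent transition kernel with P k s s' ≥ 0 and ∑_{s'} P k s s' = 1 for every k < h and s ∈ S, and B ⊆ S a set of risky states. Define the execution risk ER : ℕ → S → ℝ by ER h s = 1 if s ∈ B and 0 otherwise, and for k < h, ER k s = 1 if s ∈ B, and ER k s = ∑_{s' ∈ S} P k s s' · ER (k+1) s' if s ∉ B. Then for every s₀ ∈ S, 1 − ER 0 s₀ = ∑_{τ : Fin (h+1) → S, τ 0 = s₀, τ k ∉ B for all k ≤ h} ∏_{k=0}^{h-1} P k (τ k) (τ (k+1)); i.e., ER 0 s₀ is exactly the probability that a run of the Markov chain started at s₀ visits a risky state at some time step k ≤ h. -/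
open Finset

lemma erp_aux
    (S : Type*) [Fintype S] [DecidableEq S] (h : ℕ)
    (P : ℕ → S → S → ℝ) (B : Finset S)
    (hP_sum : ∀ k < h, ∀ s : S, ∑ s' : S, P k s s' = 1)
    (ER : ℕ → S → ℝ)
    (hER_h : ∀ s : S, ER h s = if s ∈ B then 1 else 0)
    (hER : ∀ k < h, ∀ s : S,
      ER k s = if s ∈ B then 1 else ∑ s' : S, P k s s' * ER (k + 1) s') :
    ∀ n j, j + n = h → ∀ s : S,
      1 - ER j s =
        ∑ τ ∈ Finset.univ.filter
            (fun τ : Fin (n + 1) → S => τ 0 = s ∧ ∀ k : Fin (n + 1), τ k ∉ B),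
          ∏ k : Fin n, P (j + k.val) (τ k.castSucc) (τ k.succ) := by
  intro n
  induction n with
  | zero =>
    intro j hj s
    have hj' : j = h := by omega
    rw [hj', hER_h, Finset.sum_filter]
    rw [Fintype.sum_equiv (Equiv.funUnique (Fin 1) S)
      (fun τ => if τ 0 = s ∧ ∀ k : Fin 1, τ k ∉ B then
        ∏ k : Fin 0, P (h + k.val) (τ k.castSucc) (τ k.succ) else 0)
      (fun x => if x = s ∧ x ∉ B then 1 else 0)
      (by
        intro τ
        simp [Equiv.funUnique, Unique.forall_iff])]
    simp only [ite_and]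
    rw [Finset.sum_ite_eq' Finset.univ s (fun x => if x ∉ B then (1:ℝ) else 0)]
    by_cases hb : s ∈ B <;> simp [hb]
  | succ n ih =>
    intro j hj s
    have hjh : j < h := by omega
    by_cases hs : s ∈ B
    · rw [hER j hjh, if_pos hs]
      rw [Finset.sum_filter, Finset.sum_eq_zero]
      · ring
      · intro τ _
        rw [if_neg]
        rintro ⟨h0, hsafe⟩
        exact hsafe 0 (by rw [h0]; exact hs)
    · rw [hER j hjh, if_neg hs]
      have h2 : ∀ s' : S, 1 - ER (j + 1) s' =
          ∑ τ ∈ Finset.univ.filter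
              (fun τ : Fin (n + 1) → S => τ 0 = s' ∧ ∀ k : Fin (n + 1), τ k ∉ B),
            ∏ k : Fin n, P (j + 1 + k.val) (τ k.castSucc) (τ k.succ) :=
        ih (j + 1) (by omega)
      have LHS_eq : (1:ℝ) - ∑ s' : S, P j s s' * ER (j + 1) s'
          = ∑ τ' : Fin (n + 1) → S,
              (if ∀ k : Fin (n + 1), τ' k ∉ B then
                P j s (τ' 0) * ∏ k : Fin n, P (j + 1 + k.val) (τ' k.castSucc) (τ' k.succ)
              else 0) := by
        have h1 : (1:ℝ) - ∑ s' : S, P j s s' * ER (j + 1) s'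
            = ∑ s' : S, P j s s' * (1 - ER (j + 1) s') := by
          simp only [mul_sub, mul_one, Finset.sum_sub_distrib, hP_sum j hjh s]
        rw [h1]
        simp only [h2, Finset.sum_filter, Finset.mul_sum, mul_ite, mul_zero]
        rw [Finset.sum_comm]
        apply Finset.sum_congr rfl
        intro τ' _
        by_cases hC : ∀ k : Fin (n + 1), τ' k ∉ B
        · simp [hC, Finset.sum_ite_eq]
        · simp [hC]
      rw [LHS_eq]
      -- now transform RHS
      have hpair : ∀ (x : S) (τ' : Fin (n + 1) → S),
          (if (Fin.cons x τ' : Fin (n + 1 + 1) → S) 0 = s ∧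
              (∀ k : Fin (n + 1 + 1), (Fin.cons x τ' : Fin (n + 1 + 1) → S) k ∉ B) then
            ∏ k : Fin (n + 1), P (j + k.val)
              ((Fin.cons x τ' : Fin (n + 1 + 1) → S) k.castSucc)
              ((Fin.cons x τ' : Fin (n + 1 + 1) → S) k.succ)
          else 0)
          = if x = s then
              (if (∀ k : Fin (n + 1), τ' k ∉ B) ∧ x ∉ B then
                P j x (τ' 0) * ∏ k : Fin n, P (j + 1 + k.val) (τ' k.castSucc) (τ' k.succ)
              else 0)
            else 0 := by
        intro x τ'
        have hsafe : (∀ k : Fin (n + 1 + 1), (Fin.cons x τ' : Fin (n + 1 + 1) → S) k ∉ B)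
            ↔ (x ∉ B ∧ ∀ k : Fin (n + 1), τ' k ∉ B) := by
          rw [Fin.forall_fin_succ]
          simp [Fin.cons_succ]
        have hprod : (∏ k : Fin (n + 1), P (j + k.val)
              ((Fin.cons x τ' : Fin (n + 1 + 1) → S) k.castSucc)
              ((Fin.cons x τ' : Fin (n + 1 + 1) → S) k.succ))
            = P j x (τ' 0) * ∏ k : Fin n, P (j + 1 + k.val) (τ' k.castSucc) (τ' k.succ) := by
          rw [Fin.prod_univ_succ]
          congr 1
          apply Finset.prod_congr rfl
          intro k _
          rw [← Fin.succ_castSucc]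
          simp only [Fin.cons_succ]
          have : j + ↑k.succ = j + 1 + ↑k := by
            simp [Fin.val_succ]; omega
          rw [this]
        have h0 : (Fin.cons x τ' : Fin (n + 1 + 1) → S) 0 = x := rfl
        rw [h0, hprod]
        by_cases hx : x = s
        · subst hx
          by_cases hT : ∀ k : Fin (n + 1), τ' k ∉ B
          · rw [if_pos ⟨rfl, hsafe.mpr ⟨hs, hT⟩⟩, if_pos rfl, if_pos ⟨hT, hs⟩]
          · have hneg1 : ¬(x = x ∧ ∀ k : Fin (n + 1 + 1),
                (Fin.cons x τ' : Fin (n + 1 + 1) → S) k ∉ B) :=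
              fun hc => hT (hsafe.mp hc.2).2
            have hneg2 : ¬((∀ k : Fin (n + 1), τ' k ∉ B) ∧ x ∉ B) :=
              fun hc => hT hc.1
            rw [if_neg hneg1, if_pos rfl, if_neg hneg2]
        · rw [if_neg hx, if_neg]
          rintro ⟨h1, _⟩
          exact hx h1
      have RHS_eq : (∑ τ ∈ Finset.univ.filter
            (fun τ : Fin (n + 1 + 1) → S => τ 0 = s ∧ ∀ k : Fin (n + 1 + 1), τ k ∉ B),
          ∏ k : Fin (n + 1), P (j + k.val) (τ k.castSucc) (τ k.succ))
          = ∑ τ' : Fin (n + 1) → S,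
              (if ∀ k : Fin (n + 1), τ' k ∉ B then
                P j s (τ' 0) * ∏ k : Fin n, P (j + 1 + k.val) (τ' k.castSucc) (τ' k.succ)
              else 0) := by
        rw [Finset.sum_filter]
        rw [Fintype.sum_equiv (Fin.consEquiv (fun _ : Fin (n + 1 + 1) => S)).symm
          (fun τ : Fin (n + 1 + 1) → S =>
            if τ 0 = s ∧ ∀ k : Fin (n + 1 + 1), τ k ∉ B then
              ∏ k : Fin (n + 1), P (j + k.val) (τ k.castSucc) (τ k.succ) else 0)
          (fun p : S × (Fin (n + 1) → S) =>
            if (Fin.cons p.1 p.2 : Fin (n + 1 + 1) → S) 0 = s ∧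
                (∀ k : Fin (n + 1 + 1), (Fin.cons p.1 p.2 : Fin (n + 1 + 1) → S) k ∉ B) then
              ∏ k : Fin (n + 1), P (j + k.val)
                ((Fin.cons p.1 p.2 : Fin (n + 1 + 1) → S) k.castSucc)
                ((Fin.cons p.1 p.2 : Fin (n + 1 + 1) → S) k.succ)
            else 0)
          (fun τ => by
            have : (Fin.cons ((Fin.consEquiv (fun _ : Fin (n + 1 + 1) => S)).symm τ).1
                ((Fin.consEquiv (fun _ : Fin (n + 1 + 1) => S)).symm τ).2 : Fin (n+1+1) → S) = τ := by
              exact (Fin.consEquiv (fun _ : Fin (n + 1 + 1) => S)).apply_symm_apply τ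
            simp only [this])]
        rw [Fintype.sum_prod_type]
        simp only [hpair]
        rw [Finset.sum_comm]
        apply Finset.sum_congr rfl
        intro τ' _
        rw [Finset.sum_ite_eq' Finset.univ s
          (fun x => if (∀ k : Fin (n + 1), τ' k ∉ B) ∧ x ∉ B then
            P j x (τ' 0) * ∏ k : Fin n, P (j + 1 + k.val) (τ' k.castSucc) (τ' k.succ) else 0)]
        simp only [Finset.mem_univ, if_true]
        by_cases hT : ∀ k : Fin (n + 1), τ' k ∉ B
        · rw [if_pos ⟨hT, hs⟩, if_pos hT]
        · rw [if_neg (fun hc => hT hc.1), if_neg hT]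
      rw [RHS_eq]

/-- with a deterministic risky set `B`, the execution-risk recursion
computes exactly the probability that a run of the Markov chain started at `s₀`
visits a risky state at some time step `k ≤ h`. -/
theorem execution_risk_eq_prob_visit_risky
    (S : Type*) [Fintype S] [DecidableEq S] (h : ℕ)
    (P : ℕ → S → S → ℝ) (B : Finset S)
    (hP_nonneg : ∀ k < h, ∀ s s' : S, 0 ≤ P k s s')
    (hP_sum : ∀ k < h, ∀ s : S, ∑ s' : S, P k s s' = 1)
    (ER : ℕ → S → ℝ)
    (hER_h : ∀ s : S, ER h s = if s ∈ B then 1 else 0)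
    (hER : ∀ k < h, ∀ s : S,
      ER k s = if s ∈ B then 1 else ∑ s' : S, P k s s' * ER (k + 1) s')
    (s₀ : S) :
    1 - ER 0 s₀ =
      ∑ τ ∈ Finset.univ.filter
          (fun τ : Fin (h + 1) → S => τ 0 = s₀ ∧ ∀ k : Fin (h + 1), τ k ∉ B),
        ∏ k : Fin h, P k.val (τ k.castSucc) (τ k.succ) := by
  have := erp_aux S h P B hP_sum ER hER_h hER h 0 (by omega) s₀
  simpa using this
end

section
/- Let S be a finite type, h a natural number, P : ℕ → S → S → ℝ a time-dependent transition kernel with P k s s' ≥ 0 and ∑_{s'} P k s s' = 1 for every k < h and s ∈ S, and r : S → ℝ with 0 ≤ r s ≤ 1 (the probability of failure at each state, failures occurring independently at each visited state). Define ER : ℕ → S → ℝ by ER h s = r s, and for k < h, ER k s = r s + (1 − r s) · ∑_{s' ∈ S} P k s s' · ER (k+1) s'. Then for every s₀ ∈ S, 1 − ER 0 s₀ = ∑_{τ : Fin (h+1) → S, τ 0 = s₀} (∏_{k=0}^{h-1} P k (τ k) (τ (k+1))) · (∏_{k=0}^{h} (1 − r (τ k))); i.e., the recursion computes the probability of at least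 one failure along the run when each visited state s contributes an independent failure with probability r s. -/
section Aux
variable {S : Type*} [Fintype S] [DecidableEq S]

lemma sum_filter_cons (m : ℕ) (s : S) (F : (Fin (m+1) → S) → ℝ) :
    ∑ τ ∈ Finset.univ.filter (fun τ : Fin (m+1) → S => τ 0 = s), F τ
      = ∑ g : Fin m → S, F (Fin.cons s g) := by
  refine Finset.sum_bij' (fun τ _ => Fin.tail τ) (fun g _ => Fin.cons s g) ?_ ?_ ?_ ?_ ?_
  · intro τ hτ
    simp
  · intro g hg
    simp
  · intro τ hτ
    simp at hτ
    simp [← hτ, Fin.cons_self_tail]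
  · intro g hg
    simp [Fin.tail_cons]
  · intro τ hτ
    simp at hτ
    simp [← hτ, Fin.cons_self_tail]

noncomputable def G (P : ℕ → S → S → ℝ) (r : S → ℝ) : ℕ → ℕ → S → ℝ
  | 0, _, s => 1 - r s
  | (m+1), k, s => (1 - r s) * ∑ s' : S, P k s s' * G P r m (k+1) s'

lemma G_eq_sum (P : ℕ → S → S → ℝ) (r : S → ℝ) :
    ∀ m k (s : S), G P r m k s =
      ∑ τ ∈ Finset.univ.filter (fun τ : Fin (m+1) → S => τ 0 = s),
        (∏ j : Fin m, P (k + j.val) (τ j.castSucc) (τ j.succ)) *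
          (∏ j : Fin (m+1), (1 - r (τ j))) := by
  intro m
  induction m with
  | zero =>
    intro k s
    rw [sum_filter_cons]
    simp [G]
  | succ m ih =>
    intro k s
    rw [sum_filter_cons]
    have key : ∀ g : Fin (m+1) → S,
        let c : Fin (m+2) → S := Fin.cons s g
        (∏ j : Fin (m+1), P (k + j.val) (c j.castSucc) (c j.succ)) *
          (∏ j : Fin (m+2), (1 - r (c j)))
        = (1 - r s) * (P k s (g 0) *
            ((∏ j : Fin m, P (k + 1 + j.val) (g j.castSucc) (g j.succ)) *
              (∏ j : Fin (m+1), (1 - r (g j))))) := by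
      intro g
      dsimp only
      simp only [Fin.prod_univ_succ]
      have h1 : ∀ j : Fin m, Fin.cons (α := fun _ => S) s g (j.succ.castSucc) = g j.castSucc := by
        intro j; rw [← Fin.succ_castSucc]; simp
      simp only [Fin.cons_succ, Fin.cons_zero, Fin.castSucc_zero, Fin.val_succ, h1]
      have h2 : ∀ j : Fin m, k + (j.val + 1) = k + 1 + j.val := by intro j; ring
      simp only [h2, Fin.val_zero, add_zero]
      ring
    simp only [key]
    rw [← Finset.mul_sum]
    show G P r (m+1) k s = _
    rw [G]
    congr 1
    rw [← Finset.sum_fiberwise (Finset.univ : Finset (Fin (m+1) → S))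
      (fun g => g 0)
      (fun g => P k s (g 0) * ((∏ j : Fin m, P (k + 1 + j.val) (g j.castSucc) (g j.succ)) *
              (∏ j : Fin (m+1), (1 - r (g j)))))]
    refine Finset.sum_congr rfl fun s' _ => ?_
    rw [ih (k+1) s', Finset.mul_sum]
    refine Finset.sum_congr rfl fun g hg => ?_
    simp at hg
    rw [hg]

end Aux

/-- the execution-risk recursion (Lemma 1 of the paper) computes the
probability of at least one failure along the run, when each visited state `s`
contributes an independent failure with probability `r s`. -/
theorem execution_risk_eq_prob_failure
    (S : Type*) [Fintype S] [DecidableEq S] (h : ℕ)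
    (P : ℕ → S → S → ℝ) (r : S → ℝ)
    (hP_nonneg : ∀ k < h, ∀ s s' : S, 0 ≤ P k s s')
    (hP_sum : ∀ k < h, ∀ s : S, ∑ s' : S, P k s s' = 1)
    (hr : ∀ s : S, 0 ≤ r s ∧ r s ≤ 1)
    (ER : ℕ → S → ℝ)
    (hER_h : ∀ s : S, ER h s = r s)
    (hER : ∀ k < h, ∀ s : S,
      ER k s = r s + (1 - r s) * ∑ s' : S, P k s s' * ER (k + 1) s')
    (s₀ : S) :
    1 - ER 0 s₀ =
      ∑ τ ∈ Finset.univ.filter (fun τ : Fin (h + 1) → S => τ 0 = s₀),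
        (∏ k : Fin h, P k.val (τ k.castSucc) (τ k.succ)) *
          (∏ k : Fin (h + 1), (1 - r (τ k))) := by
  have main : ∀ m k, k + m = h → ∀ s : S, 1 - ER k s = G P r m k s := by
    intro m
    induction m with
    | zero =>
      intro k hk s
      simp at hk
      subst hk
      simp [G, hER_h]
    | succ m ih =>
      intro k hk s
      have hkh : k < h := by omega
      rw [hER k hkh s, G]
      have hsplit : ∑ s' : S, P k s s' * (1 - ER (k+1) s')
          = 1 - ∑ s' : S, P k s s' * ER (k+1) s' := by
        have e : ∑ s' : S, P k s s' * (1 - ER (k+1) s')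
            = (∑ s' : S, P k s s') - ∑ s' : S, P k s s' * ER (k+1) s' := by
          rw [← Finset.sum_sub_distrib]
          exact Finset.sum_congr rfl fun s' _ => by ring
        rw [e, hP_sum k hkh s]
      calc 1 - (r s + (1 - r s) * ∑ s' : S, P k s s' * ER (k + 1) s')
          = (1 - r s) * (1 - ∑ s' : S, P k s s' * ER (k+1) s') := by ring
        _ = (1 - r s) * ∑ s' : S, P k s s' * (1 - ER (k+1) s') := by rw [hsplit]
        _ = (1 - r s) * ∑ s' : S, P k s s' * G P r m (k+1) s' := by
            congr 1
            exact Finset.sum_congr rfl fun s' _ => by rw [ih (k+1) (by omega) s']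
  rw [main h 0 (by omega) s₀, G_eq_sum]
  simp
end

section
/- Let S be a finite type, h a natural number, P : ℕ → S → S → ℝ with P k s s' ≥ 0 and ∑_{s'} P k s s' = 1 for every k < h and s ∈ S, u : ℕ → S → ℝ nonnegative, and L : ℕ → ℝ with L k > 0 for all k < h. Define v : ℕ → S → ℝ by v h s = 0 and v k s = u k s + ∑_{s'} P k s s' · v (k+1) s', and define the discretized value function v̄ : ℕ → S → ℝ by v̄ h s = 0 and v̄ k s = ⌊(u k s + ∑_{s'} P k s s' · v̄ (k+1) s') / L k⌋ · L k for k < h. Then for every k ≤ h and s ∈ S, v̄ k s ≥ v k s − ∑_{k'=k}^{h-1} L k'. -/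
/-- Lemma 3, lem:dis: the floor-discretized value function loses at
most `∑_{k'=k}^{h-1} L k'` compared with the true value function. -/
theorem discretized_value_lower_bound
    (S : Type*) [Fintype S] (h : ℕ)
    (P : ℕ → S → S → ℝ) (u : ℕ → S → ℝ) (L : ℕ → ℝ)
    (hP_nonneg : ∀ k < h, ∀ s s' : S, 0 ≤ P k s s')
    (hP_sum : ∀ k < h, ∀ s : S, ∑ s' : S, P k s s' = 1)
    (hu_nonneg : ∀ k < h, ∀ s : S, 0 ≤ u k s)
    (hL : ∀ k < h, 0 < L k)
    (v : ℕ → S → ℝ)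
    (hv_h : ∀ s : S, v h s = 0)
    (hv : ∀ k < h, ∀ s : S, v k s = u k s + ∑ s' : S, P k s s' * v (k + 1) s')
    (vbar : ℕ → S → ℝ)
    (hvbar_h : ∀ s : S, vbar h s = 0)
    (hvbar : ∀ k < h, ∀ s : S,
      vbar k s =
        (⌊(u k s + ∑ s' : S, P k s s' * vbar (k + 1) s') / L k⌋ : ℝ) * L k) :
    ∀ k ≤ h, ∀ s : S, vbar k s ≥ v k s - ∑ k' ∈ Finset.Ico k h, L k' := by
  intro k hk s
  induction' hd : h - k with d ih generalizing k s
  · have hkh : k = h := by omega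
    subst hkh
    simp [hv_h, hvbar_h]
  · have hkh : k < h := by omega
    have ih' : ∀ s' : S, vbar (k + 1) s' ≥ v (k + 1) s' - ∑ k' ∈ Finset.Ico (k + 1) h, L k' :=
      fun s' => ih (k + 1) (by omega) s' (by omega)
    set c := ∑ k' ∈ Finset.Ico (k + 1) h, L k' with hc
    set x := u k s + ∑ s' : S, P k s s' * vbar (k + 1) s' with hx
    have hLk := hL k hkh
    have hxge : x ≥ v k s - c := by
      have hsum : ∑ s' : S, P k s s' * vbar (k + 1) s' ≥
          ∑ s' : S, P k s s' * (v (k + 1) s' - c) := by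
        apply Finset.sum_le_sum
        intro i _
        exact mul_le_mul_of_nonneg_left (ih' i) (hP_nonneg k hkh s i)
      have hexp : ∑ s' : S, P k s s' * (v (k + 1) s' - c)
          = (∑ s' : S, P k s s' * v (k + 1) s') - c := by
        simp only [mul_sub]
        rw [Finset.sum_sub_distrib, ← Finset.sum_mul, hP_sum k hkh s, one_mul]
      rw [hv k hkh s, hx]
      rw [hexp] at hsum
      linarith
    have hfloor : (⌊x / L k⌋ : ℝ) * L k ≥ x - L k := by
      have h1 : x / L k < ⌊x / L k⌋ + 1 := Int.lt_floor_add_one _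
      have h2 : (x / L k - 1) * L k < ((⌊x / L k⌋ : ℝ)) * L k := by
        apply mul_lt_mul_of_pos_right _ hLk
        linarith
      have h3 : (x / L k - 1) * L k = x - L k := by
        field_simp
      linarith
    have hvb : vbar k s = (⌊x / L k⌋ : ℝ) * L k := hvbar k hkh s
    have hIco : ∑ k' ∈ Finset.Ico k h, L k' = L k + c :=
      Finset.sum_eq_sum_Ico_succ_bot hkh L
    rw [hvb, hIco]
    linarith
end

section
/- Let S be a finite type, h a natural number, P : ℕ → S → S → ℝ with P k s s' ≥ 0 and ∑_{s'} P k s s' = 1 for every k < h and s ∈ S, u : ℕ → S → ℝ nonnegative, and L : ℕ → ℝ with L k > 0 for all k < h. Define v : ℕ → S → ℝ by v h s = 0 and v k s = u k s + ∑_{s'} P k s s' · v (k+1) s', and v̄ : ℕ → S → ℝ by v̄ h s = 0 and v̄ k s = ⌊(u k s + ∑_{s'} P k s s' · v̄ (k+1) s') / L k⌋ · L k for k < h. Then for every k ≤ h and s ∈ S, 0 ≤ v̄ k s ≤ v k s. -/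
/-- the floor-discretized value function is nonnegative and never
exceeds the true value function. -/
theorem discretized_value_nonneg_and_le
    (S : Type*) [Fintype S] (h : ℕ)
    (P : ℕ → S → S → ℝ) (u : ℕ → S → ℝ) (L : ℕ → ℝ)
    (hP_nonneg : ∀ k < h, ∀ s s' : S, 0 ≤ P k s s')
    (hP_sum : ∀ k < h, ∀ s : S, ∑ s' : S, P k s s' = 1)
    (hu_nonneg : ∀ k < h, ∀ s : S, 0 ≤ u k s)
    (hL : ∀ k < h, 0 < L k)
    (v : ℕ → S → ℝ)
    (hv_h : ∀ s : S, v h s = 0)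
    (hv : ∀ k < h, ∀ s : S, v k s = u k s + ∑ s' : S, P k s s' * v (k + 1) s')
    (vbar : ℕ → S → ℝ)
    (hvbar_h : ∀ s : S, vbar h s = 0)
    (hvbar : ∀ k < h, ∀ s : S,
      vbar k s =
        (⌊(u k s + ∑ s' : S, P k s s' * vbar (k + 1) s') / L k⌋ : ℝ) * L k) :
    ∀ k ≤ h, ∀ s : S, 0 ≤ vbar k s ∧ vbar k s ≤ v k s := by
  have key : ∀ d : ℕ, ∀ k : ℕ, k ≤ h → h - k = d →
      ∀ s : S, 0 ≤ vbar k s ∧ vbar k s ≤ v k s := by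
    intro d
    induction d with
    | zero =>
      intro k hk hd s
      have : k = h := by omega
      subst this
      simp [hvbar_h, hv_h]
    | succ d ih =>
      intro k hk hd s
      have hkh : k < h := by omega
      have ih' : ∀ s' : S, 0 ≤ vbar (k+1) s' ∧ vbar (k+1) s' ≤ v (k+1) s' :=
        ih (k+1) (by omega) (by omega)
      set x := u k s + ∑ s' : S, P k s s' * vbar (k + 1) s' with hx
      have hLk := hL k hkh
      have hx_nonneg : 0 ≤ x := by
        apply add_nonneg (hu_nonneg k hkh s)
        exact Finset.sum_nonneg fun s' _ =>
          mul_nonneg (hP_nonneg k hkh s s') (ih' s').1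
      have h1 : 0 ≤ vbar k s := by
        rw [hvbar k hkh s]
        have : (0 : ℤ) ≤ ⌊x / L k⌋ :=
          Int.floor_nonneg.mpr (div_nonneg hx_nonneg hLk.le)
        exact mul_nonneg (by exact_mod_cast this) hLk.le
      refine ⟨h1, ?_⟩
      have h2 : vbar k s ≤ x := by
        rw [hvbar k hkh s]
        calc (⌊x / L k⌋ : ℝ) * L k ≤ (x / L k) * L k :=
              mul_le_mul_of_nonneg_right (Int.floor_le _) hLk.le
          _ = x := div_mul_cancel₀ _ hLk.ne'
      have h3 : x ≤ v k s := by
        rw [hv k hkh s]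
        apply add_le_add le_rfl
        exact Finset.sum_le_sum fun s' _ =>
          mul_le_mul_of_nonneg_left (ih' s').2 (hP_nonneg k hkh s s')
      exact h2.trans h3
  intro k hk s
  exact key (h - k) k hk rfl s
end

section
/- Let S be a finite type, h a natural number, P : ℕ → S → S → ℝ with P k s s' ≥ 0 and ∑_{s'} P k s s' = 1 for every k < h and s ∈ S, u : ℕ → S → ℝ nonnegative, U_max ∈ ℝ with 0 ≤ u k s ≤ U_max for all k < h, s ∈ S, and L : ℕ → ℝ with L k > 0 for all k < h. Define v̄ : ℕ → S → ℝ by v̄ h s = 0 and v̄ k s = ⌊(u k s + ∑_{s'} P k s s' · v̄ (k+1) s') / L k⌋ · L k for k < h. Then for every k < h and s ∈ S there exists a natural number m with v̄ k s = m · L k and m ≤ ⌊(h − k) · U_max / L k⌋; in particular v̄ k s belongs to the discrete set ℒ_k = {0, L k, 2 L k, …, ⌊(h−k)U_max/L k⌋ · L k}. -/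
/-- every achievable floor-discretized value at time `k < h` is a
multiple `m * L k` with `m ≤ ⌊(h - k) * U_max / L k⌋`, i.e. it lies in the
discrete set `ℒ_k = {0, L k, 2 L k, …, ⌊(h-k)U_max/L k⌋ · L k}`. -/
theorem discretized_value_mem_level_set
    (S : Type*) [Fintype S] (h : ℕ)
    (P : ℕ → S → S → ℝ) (u : ℕ → S → ℝ) (U_max : ℝ) (L : ℕ → ℝ)
    (hP_nonneg : ∀ k < h, ∀ s s' : S, 0 ≤ P k s s')
    (hP_sum : ∀ k < h, ∀ s : S, ∑ s' : S, P k s s' = 1)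
    (hu : ∀ k < h, ∀ s : S, 0 ≤ u k s ∧ u k s ≤ U_max)
    (hL : ∀ k < h, 0 < L k)
    (vbar : ℕ → S → ℝ)
    (hvbar_h : ∀ s : S, vbar h s = 0)
    (hvbar : ∀ k < h, ∀ s : S,
      vbar k s =
        (⌊(u k s + ∑ s' : S, P k s s' * vbar (k + 1) s') / L k⌋ : ℝ) * L k) :
    ∀ k < h, ∀ s : S, ∃ m : ℕ,
      vbar k s = (m : ℝ) * L k ∧ (m : ℤ) ≤ ⌊((h - k : ℕ) : ℝ) * U_max / L k⌋ := by
  -- key bounds: 0 ≤ vbar k s ≤ (h-k) * U_max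
  have key : ∀ d : ℕ, ∀ k : ℕ, k + d = h → ∀ s : S,
      0 ≤ vbar k s ∧ vbar k s ≤ (d : ℝ) * U_max := by
    intro d
    induction d with
    | zero =>
      intro k hk s
      simp at hk
      subst hk
      simp [hvbar_h]
    | succ d ih =>
      intro k hk s
      have hkh : k < h := by omega
      have hk1 : (k + 1) + d = h := by omega
      have hLk := hL k hkh
      have hUnn : 0 ≤ U_max := le_trans (hu k hkh s).1 (hu k hkh s).2
      set x := u k s + ∑ s' : S, P k s s' * vbar (k + 1) s' with hx
      have hx0 : 0 ≤ x := by
        apply add_nonneg (hu k hkh s).1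
        apply Finset.sum_nonneg
        intro s' _
        exact mul_nonneg (hP_nonneg k hkh s s') (ih (k + 1) hk1 s').1
      have hxle : x ≤ ((d : ℝ) + 1) * U_max := by
        have hsum : ∑ s' : S, P k s s' * vbar (k + 1) s' ≤ (d : ℝ) * U_max := by
          calc ∑ s' : S, P k s s' * vbar (k + 1) s'
              ≤ ∑ s' : S, P k s s' * ((d : ℝ) * U_max) := by
                apply Finset.sum_le_sum
                intro s' _
                exact mul_le_mul_of_nonneg_left (ih (k + 1) hk1 s').2
                  (hP_nonneg k hkh s s')
            _ = (∑ s' : S, P k s s') * ((d : ℝ) * U_max) := by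
                rw [Finset.sum_mul]
            _ = (d : ℝ) * U_max := by rw [hP_sum k hkh s, one_mul]
        have := (hu k hkh s).2
        have : x ≤ U_max + (d : ℝ) * U_max := add_le_add this hsum
        linarith
      rw [hvbar k hkh s, ← hx]
      constructor
      · apply mul_nonneg _ hLk.le
        have : (0 : ℤ) ≤ ⌊x / L k⌋ := Int.floor_nonneg.mpr (div_nonneg hx0 hLk.le)
        exact_mod_cast this
      · have h1 : (⌊x / L k⌋ : ℝ) * L k ≤ x := by
          have := Int.floor_le (x / L k)
          calc (⌊x / L k⌋ : ℝ) * L k ≤ (x / L k) * L k :=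
                mul_le_mul_of_nonneg_right this hLk.le
            _ = x := div_mul_cancel₀ x hLk.ne'
        calc (⌊x / L k⌋ : ℝ) * L k ≤ x := h1
          _ ≤ ((d : ℝ) + 1) * U_max := hxle
          _ = ((d + 1 : ℕ) : ℝ) * U_max := by push_cast; ring
  intro k hk s
  have hLk := hL k hk
  have hk1 : (k + 1) + (h - (k + 1)) = h := by omega
  set x := u k s + ∑ s' : S, P k s s' * vbar (k + 1) s' with hx
  have hx0 : 0 ≤ x := by
    apply add_nonneg (hu k hk s).1
    apply Finset.sum_nonneg
    intro s' _
    exact mul_nonneg (hP_nonneg k hk s s') (key _ (k + 1) hk1 s').1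
  have hUnn : 0 ≤ U_max := le_trans (hu k hk s).1 (hu k hk s).2
  have hxle : x ≤ ((h - k : ℕ) : ℝ) * U_max := by
    have hsum : ∑ s' : S, P k s s' * vbar (k + 1) s'
        ≤ ((h - (k + 1) : ℕ) : ℝ) * U_max := by
      calc ∑ s' : S, P k s s' * vbar (k + 1) s'
          ≤ ∑ s' : S, P k s s' * (((h - (k + 1) : ℕ) : ℝ) * U_max) := by
            apply Finset.sum_le_sum
            intro s' _
            exact mul_le_mul_of_nonneg_left (key _ (k + 1) hk1 s').2
              (hP_nonneg k hk s s')
        _ = (∑ s' : S, P k s s') * (((h - (k + 1) : ℕ) : ℝ) * U_max) := by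
            rw [Finset.sum_mul]
        _ = ((h - (k + 1) : ℕ) : ℝ) * U_max := by rw [hP_sum k hk s, one_mul]
    have hcast : ((h - k : ℕ) : ℝ) = ((h - (k + 1) : ℕ) : ℝ) + 1 := by
      have : h - k = (h - (k + 1)) + 1 := by omega
      rw [this]; push_cast; ring
    have := (hu k hk s).2
    rw [hcast]
    nlinarith
  have hfl0 : (0 : ℤ) ≤ ⌊x / L k⌋ := Int.floor_nonneg.mpr (div_nonneg hx0 hLk.le)
  refine ⟨⌊x / L k⌋.toNat, ?_, ?_⟩
  · rw [hvbar k hk s, ← hx]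
    congr 1
    exact_mod_cast (Int.toNat_of_nonneg hfl0).symm
  · rw [Int.toNat_of_nonneg hfl0]
    exact Int.floor_le_floor (by gcongr)
end

section
/- Let S be a finite type, h ≥ 1 a natural number, P : ℕ → S → S → ℝ with P k s s' ≥ 0 and ∑_{s'} P k s s' = 1 for every k < h and s ∈ S, u : ℕ → S → ℝ nonnegative with u k s ≤ U_max where U_max > 0, ε > 0, and L k = ε·U_max / ((h − k)·(Real.log h + 1)) for k < h. Let v, w : ℕ → S → ℝ be two value functions defined by the Bellman recursion v h s = w h s = 0, v k s = u₁ k s + ∑_{s'} P₁ k s s' · v (k+1) s' and w k s = u₂ k s + ∑_{s'} P₂ k s s' · w (k+1) s' (for two policies, i.e., two choices of kernel Pᵢ and utility uᵢ, each stochastic and with 0 ≤ uᵢ k s ≤ U_max), and let v̄, w̄ be the corresponding floor-discretized value functions with levels L k. If v̄ 0 s₀ ≥ w̄ 0 s₀ and w 0 s₀ ≥ U_max, then v 0 s₀ ≥ (1 − ε) · w 0 s₀. -/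
/-- Corollary 1: with discretization levels
`L k = ε·U_max/((h−k)(ln h + 1))`, if the discretized value of policy 1 at `s₀`
dominates that of policy 2, and the true value of policy 2 is at least `U_max`,
then policy 1 is a `(1 − ε)`-approximation of policy 2. -/
theorem fptas_approximation_guarantee
    (S : Type*) [Fintype S] (h : ℕ) (hh : 1 ≤ h)
    (U_max ε : ℝ) (hU : 0 < U_max) (hε : 0 < ε)
    (L : ℕ → ℝ)
    (hL : ∀ k < h, L k = ε * U_max / (((h - k : ℕ) : ℝ) * (Real.log h + 1)))
    (P₁ P₂ : ℕ → S → S → ℝ) (u₁ u₂ : ℕ → S → ℝ)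
    (hP₁_nonneg : ∀ k < h, ∀ s s' : S, 0 ≤ P₁ k s s')
    (hP₁_sum : ∀ k < h, ∀ s : S, ∑ s' : S, P₁ k s s' = 1)
    (hP₂_nonneg : ∀ k < h, ∀ s s' : S, 0 ≤ P₂ k s s')
    (hP₂_sum : ∀ k < h, ∀ s : S, ∑ s' : S, P₂ k s s' = 1)
    (hu₁ : ∀ k < h, ∀ s : S, 0 ≤ u₁ k s ∧ u₁ k s ≤ U_max)
    (hu₂ : ∀ k < h, ∀ s : S, 0 ≤ u₂ k s ∧ u₂ k s ≤ U_max)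
    (v w vbar wbar : ℕ → S → ℝ)
    (hv_h : ∀ s : S, v h s = 0)
    (hv : ∀ k < h, ∀ s : S, v k s = u₁ k s + ∑ s' : S, P₁ k s s' * v (k + 1) s')
    (hw_h : ∀ s : S, w h s = 0)
    (hw : ∀ k < h, ∀ s : S, w k s = u₂ k s + ∑ s' : S, P₂ k s s' * w (k + 1) s')
    (hvbar_h : ∀ s : S, vbar h s = 0)
    (hvbar : ∀ k < h, ∀ s : S,
      vbar k s =
        (⌊(u₁ k s + ∑ s' : S, P₁ k s s' * vbar (k + 1) s') / L k⌋ : ℝ) * L k)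
    (hwbar_h : ∀ s : S, wbar h s = 0)
    (hwbar : ∀ k < h, ∀ s : S,
      wbar k s =
        (⌊(u₂ k s + ∑ s' : S, P₂ k s s' * wbar (k + 1) s') / L k⌋ : ℝ) * L k)
    (s₀ : S)
    (hdom : vbar 0 s₀ ≥ wbar 0 s₀)
    (hwU : w 0 s₀ ≥ U_max) :
    v 0 s₀ ≥ (1 - ε) * w 0 s₀ := by
  have hc : 0 < Real.log h + 1 := by
    have : (0:ℝ) ≤ Real.log h := Real.log_nonneg (by exact_mod_cast hh)
    linarith
  have hLpos : ∀ k < h, 0 < L k := by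
    intro k hk
    rw [hL k hk]
    have h1 : (0:ℝ) < ((h - k : ℕ) : ℝ) := by
      have : 0 < h - k := Nat.sub_pos_of_lt hk
      exact_mod_cast this
    positivity
  -- floor bounds
  have floor_le : ∀ (x Lk : ℝ), 0 < Lk → (⌊x / Lk⌋ : ℝ) * Lk ≤ x := by
    intro x Lk hLk
    have := Int.floor_le (x / Lk)
    calc (⌊x / Lk⌋ : ℝ) * Lk ≤ (x / Lk) * Lk := by
          exact mul_le_mul_of_nonneg_right this hLk.le
      _ = x := by field_simp
  have floor_ge : ∀ (x Lk : ℝ), 0 < Lk → x - Lk ≤ (⌊x / Lk⌋ : ℝ) * Lk := by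
    intro x Lk hLk
    have := Int.sub_one_lt_floor (x / Lk)
    have h2 : (x / Lk - 1) * Lk ≤ (⌊x / Lk⌋ : ℝ) * Lk :=
      mul_le_mul_of_nonneg_right this.le hLk.le
    calc x - Lk = (x / Lk - 1) * Lk := by field_simp
      _ ≤ _ := h2
  -- vbar ≤ v
  have hA : ∀ n k, h = k + n → ∀ s, vbar k s ≤ v k s := by
    intro n
    induction n with
    | zero => intro k hk s; rw [Nat.add_zero] at hk; subst hk
              rw [hvbar_h, hv_h]
    | succ n ih =>
      intro k hk s
      have hkh : k < h := by omega
      rw [hvbar k hkh s, hv k hkh s]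
      refine le_trans (floor_le _ _ (hLpos k hkh)) ?_
      gcongr with s' _
      · exact hP₁_nonneg k hkh s s'
      · exact ih (k+1) (by omega) s'
  -- wbar ≥ w - tail sum
  have hB : ∀ n k, h = k + n → ∀ s,
      w k s - (∑ j ∈ Finset.Ico k h, L j) ≤ wbar k s := by
    intro n
    induction n with
    | zero => intro k hk s; rw [Nat.add_zero] at hk; subst hk
              simp [hwbar_h, hw_h]
    | succ n ih =>
      intro k hk s
      have hkh : k < h := by omega
      rw [hwbar k hkh s, hw k hkh s]
      refine le_trans ?_ (floor_ge _ _ (hLpos k hkh))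
      have hsum : ∑ j ∈ Finset.Ico k h, L j
          = L k + ∑ j ∈ Finset.Ico (k+1) h, L j :=
        Finset.sum_eq_sum_Ico_succ_bot hkh L
      rw [hsum]
      have key : ∑ s' : S, P₂ k s s' * w (k+1) s' - (∑ j ∈ Finset.Ico (k+1) h, L j)
          ≤ ∑ s' : S, P₂ k s s' * wbar (k+1) s' := by
        have := hP₂_sum k hkh s
        have expand : ∑ s' : S, P₂ k s s' * w (k+1) s' - (∑ j ∈ Finset.Ico (k+1) h, L j)
            = ∑ s' : S, P₂ k s s' * (w (k+1) s' - ∑ j ∈ Finset.Ico (k+1) h, L j) := by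
          rw [Finset.sum_congr rfl (fun s' _ => mul_sub (P₂ k s s') _ _),
            Finset.sum_sub_distrib, ← Finset.sum_mul, this, one_mul]
        rw [expand]
        gcongr with s' _
        · exact hP₂_nonneg k hkh s s'
        · exact ih (k+1) (by omega) s'
      linarith
  -- sum of L over range h ≤ ε * U_max
  have hR : ∑ j ∈ Finset.Ico 0 h, L j ≤ ε * U_max := by
    rw [← Finset.range_eq_Ico]
    have e1 : ∀ j ∈ Finset.range h,
        L j = ε * U_max / (Real.log h + 1) * (((h - j : ℕ) : ℝ))⁻¹ := by
      intro j hj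
      rw [hL j (Finset.mem_range.mp hj)]
      field_simp
    rw [Finset.sum_congr rfl e1, ← Finset.mul_sum]
    have e2 : ∑ j ∈ Finset.range h, (((h - j : ℕ) : ℝ))⁻¹
        = ∑ j ∈ Finset.range h, ((j : ℝ) + 1)⁻¹ := by
      rw [← Finset.sum_range_reflect]
      apply Finset.sum_congr rfl
      intro j hj
      have hj' := Finset.mem_range.mp hj
      congr 1
      have : h - (h - 1 - j) = j + 1 := by omega
      rw [this]
      push_cast
      ring
    have e3 : ∑ j ∈ Finset.range h, ((j : ℝ) + 1)⁻¹ = (harmonic h : ℝ) := by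
      rw [harmonic]
      push_cast
      apply Finset.sum_congr rfl
      intro j _
      norm_num
    have hharm : (harmonic h : ℝ) ≤ Real.log h + 1 := by
      have := harmonic_le_one_add_log h
      linarith
    rw [e2, e3]
    have hpos : 0 < ε * U_max / (Real.log h + 1) := by positivity
    calc ε * U_max / (Real.log h + 1) * (harmonic h : ℝ)
        ≤ ε * U_max / (Real.log h + 1) * (Real.log h + 1) :=
          mul_le_mul_of_nonneg_left hharm hpos.le
      _ = ε * U_max := by field_simp
  have h1 : vbar 0 s₀ ≤ v 0 s₀ := hA h 0 (by omega) s₀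
  have h2 : w 0 s₀ - (∑ j ∈ Finset.Ico 0 h, L j) ≤ wbar 0 s₀ := hB h 0 (by omega) s₀
  have h3 : w 0 s₀ - ε * U_max ≤ v 0 s₀ := by linarith
  have h4 : ε * U_max ≤ ε * w 0 s₀ := mul_le_mul_of_nonneg_left hwU hε.le
  nlinarith
end

section
/- Let S be a finite type, h ≥ 1 a natural number, U_max > 0, ε > 0, and L k = ε·U_max / (3·(h − k)·(Real.log h + 1)) for k < h. Let v, w : ℕ → S → ℝ be value functions of two policies given by the Bellman recursion (v h s = w h s = 0, v k s = u₁ k s + ∑_{s'} P₁ k s s' · v (k+1) s', and analogously for w, with each Pᵢ a stochastic kernel and 0 ≤ uᵢ k s ≤ U_max), and let v̄, w̄ be the corresponding floor-discretized value functions with levels L k. If v̄ 0 s₀ ≥ w̄ 0 s₀ − 2·∑_{k=0}^{h-1} L k and w 0 s₀ ≥ U_max, then v 0 s₀ ≥ (1 − ε) · w 0 s₀. -/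
/-- Corollary 2: with discretization levels
`L k = ε·U_max/(3(h−k)(ln h + 1))`, if the discretized value of policy 1 at `s₀`
is at least that of policy 2 minus `2·∑_k L k`, and the true value of policy 2
is at least `U_max`, then policy 1 is a `(1 − ε)`-approximation of policy 2. -/
theorem fptas_disjoint_approximation_guarantee
    (S : Type*) [Fintype S] (h : ℕ) (hh : 1 ≤ h)
    (U_max ε : ℝ) (hU : 0 < U_max) (hε : 0 < ε)
    (L : ℕ → ℝ)
    (hL : ∀ k < h,
      L k = ε * U_max / (3 * ((h - k : ℕ) : ℝ) * (Real.log h + 1)))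
    (P₁ P₂ : ℕ → S → S → ℝ) (u₁ u₂ : ℕ → S → ℝ)
    (hP₁_nonneg : ∀ k < h, ∀ s s' : S, 0 ≤ P₁ k s s')
    (hP₁_sum : ∀ k < h, ∀ s : S, ∑ s' : S, P₁ k s s' = 1)
    (hP₂_nonneg : ∀ k < h, ∀ s s' : S, 0 ≤ P₂ k s s')
    (hP₂_sum : ∀ k < h, ∀ s : S, ∑ s' : S, P₂ k s s' = 1)
    (hu₁ : ∀ k < h, ∀ s : S, 0 ≤ u₁ k s ∧ u₁ k s ≤ U_max)
    (hu₂ : ∀ k < h, ∀ s : S, 0 ≤ u₂ k s ∧ u₂ k s ≤ U_max)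
    (v w vbar wbar : ℕ → S → ℝ)
    (hv_h : ∀ s : S, v h s = 0)
    (hv : ∀ k < h, ∀ s : S, v k s = u₁ k s + ∑ s' : S, P₁ k s s' * v (k + 1) s')
    (hw_h : ∀ s : S, w h s = 0)
    (hw : ∀ k < h, ∀ s : S, w k s = u₂ k s + ∑ s' : S, P₂ k s s' * w (k + 1) s')
    (hvbar_h : ∀ s : S, vbar h s = 0)
    (hvbar : ∀ k < h, ∀ s : S,
      vbar k s =
        (⌊(u₁ k s + ∑ s' : S, P₁ k s s' * vbar (k + 1) s') / L k⌋ : ℝ) * L k)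
    (hwbar_h : ∀ s : S, wbar h s = 0)
    (hwbar : ∀ k < h, ∀ s : S,
      wbar k s =
        (⌊(u₂ k s + ∑ s' : S, P₂ k s s' * wbar (k + 1) s') / L k⌋ : ℝ) * L k)
    (s₀ : S)
    (hdom : vbar 0 s₀ ≥ wbar 0 s₀ - 2 * ∑ k ∈ Finset.range h, L k)
    (hwU : w 0 s₀ ≥ U_max) :
    v 0 s₀ ≥ (1 - ε) * w 0 s₀ := by

  have hC : (0:ℝ) < Real.log h + 1 := by
    have : (0:ℝ) ≤ Real.log h := Real.log_nonneg (by exact_mod_cast hh)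
    linarith
  have hLpos : ∀ k < h, 0 < L k := by
    intro k hk
    rw [hL k hk]
    have hn : (0:ℝ) < ((h - k : ℕ) : ℝ) := by
      have : 0 < h - k := Nat.sub_pos_of_lt hk
      exact_mod_cast this
    positivity
  -- Lemma A : vbar ≤ v
  have hA : ∀ d, d ≤ h → ∀ s, vbar (h - d) s ≤ v (h - d) s := by
    intro d
    induction d with
    | zero => intro _ s; simp [hvbar_h, hv_h]
    | succ d ih =>
      intro hd s
      have hk : h - (d+1) < h := by omega
      have hsucc : h - (d+1) + 1 = h - d := by omega
      rw [hvbar _ hk, hv _ hk]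
      set k := h - (d+1) with hkdef
      have hfl : (⌊(u₁ k s + ∑ s' : S, P₁ k s s' * vbar (k+1) s') / L k⌋ : ℝ) * L k
          ≤ u₁ k s + ∑ s' : S, P₁ k s s' * vbar (k+1) s' := by
        have h1 := Int.floor_le ((u₁ k s + ∑ s' : S, P₁ k s s' * vbar (k+1) s') / L k)
        have h2 := mul_le_mul_of_nonneg_right h1 (hLpos k hk).le
        rwa [div_mul_cancel₀ _ (hLpos k hk).ne'] at h2
      have hsum : ∑ s' : S, P₁ k s s' * vbar (k+1) s' ≤ ∑ s' : S, P₁ k s s' * v (k+1) s' := by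
        refine Finset.sum_le_sum fun s' _ => mul_le_mul_of_nonneg_left ?_ (hP₁_nonneg k hk s s')
        rw [hsucc]; exact ih (by omega) s'
      linarith
  -- Lemma B : w - tail sum ≤ wbar
  have hB : ∀ d, d ≤ h → ∀ s,
      w (h - d) s - ∑ j ∈ Finset.Ico (h - d) h, L j ≤ wbar (h - d) s := by
    intro d
    induction d with
    | zero => intro _ s; simp [hw_h, hwbar_h]
    | succ d ih =>
      intro hd s
      have hk : h - (d+1) < h := by omega
      have hsucc : h - (d+1) + 1 = h - d := by omega
      rw [hwbar _ hk, hw _ hk]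
      set k := h - (d+1) with hkdef
      set T : ℝ := ∑ j ∈ Finset.Ico (h - d) h, L j with hTdef
      set x : ℝ := u₂ k s + ∑ s' : S, P₂ k s s' * wbar (k+1) s' with hxdef
      have hfl : x - L k ≤ (⌊x / L k⌋ : ℝ) * L k := by
        have h1 : x / L k - 1 < (⌊x / L k⌋ : ℝ) := Int.sub_one_lt_floor _
        have h2 := mul_le_mul_of_nonneg_right h1.le (hLpos k hk).le
        rwa [sub_one_mul, div_mul_cancel₀ _ (hLpos k hk).ne'] at h2
      have hsum : (∑ s' : S, P₂ k s s' * w (k+1) s') - T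
          ≤ ∑ s' : S, P₂ k s s' * wbar (k+1) s' := by
        have step : ∑ s' : S, P₂ k s s' * (w (k+1) s' - T)
            ≤ ∑ s' : S, P₂ k s s' * wbar (k+1) s' := by
          refine Finset.sum_le_sum fun s' _ => mul_le_mul_of_nonneg_left ?_ (hP₂_nonneg k hk s s')
          rw [hsucc]; exact ih (by omega) s'
        have expand : ∑ s' : S, P₂ k s s' * (w (k+1) s' - T)
            = (∑ s' : S, P₂ k s s' * w (k+1) s') - T := by
          simp only [mul_sub, Finset.sum_sub_distrib, ← Finset.sum_mul, hP₂_sum k hk, one_mul]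
        linarith [step, expand.symm.le, expand.le]
      have hsplit : ∑ j ∈ Finset.Ico k h, L j = L k + ∑ j ∈ Finset.Ico (k+1) h, L j :=
        Finset.sum_eq_sum_Ico_succ_bot hk L
      rw [hsucc] at hsplit
      have hxL : x - L k ≤ (⌊x / L k⌋ : ℝ) * L k := hfl
      have : u₂ k s + ((∑ s' : S, P₂ k s s' * w (k+1) s') - T) ≤ x := by
        rw [hxdef]; linarith
      linarith
  -- sum of L bound
  have hre : ∑ k ∈ Finset.range h, (((h - k : ℕ):ℝ))⁻¹
      = ∑ i ∈ Finset.range h, (((i+1:ℕ)):ℝ)⁻¹ := by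
    rw [← Finset.sum_range_reflect (fun i => (((i+1:ℕ)):ℝ)⁻¹) h]
    refine Finset.sum_congr rfl fun k hk => ?_
    have hk' : k < h := Finset.mem_range.mp hk
    have : h - 1 - k + 1 = h - k := by omega
    rw [this]
  have hharm : ∑ k ∈ Finset.range h, (((h - k : ℕ):ℝ))⁻¹ ≤ Real.log h + 1 := by
    rw [hre]
    have h1 := harmonic_le_one_add_log h
    have h2 : ((harmonic h : ℚ) : ℝ) = ∑ i ∈ Finset.range h, (((i+1:ℕ)):ℝ)⁻¹ := by
      rw [harmonic]; push_cast; ring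
    rw [h2] at h1
    linarith
  have hSum : ∑ k ∈ Finset.range h, L k ≤ ε * U_max / 3 := by
    have heq : ∀ k ∈ Finset.range h,
        L k = (ε * U_max / (3 * (Real.log h + 1))) * (((h - k:ℕ):ℝ))⁻¹ := by
      intro k hk
      have hk' : k < h := Finset.mem_range.mp hk
      rw [hL k hk',
        show (3 * ((h - k:ℕ):ℝ) * (Real.log h + 1))
            = (3 * (Real.log h + 1)) * ((h - k:ℕ):ℝ) by ring,
        ← div_div, div_eq_mul_inv]
    rw [Finset.sum_congr rfl heq, ← Finset.mul_sum]
    have hpos : 0 < ε * U_max / (3 * (Real.log h + 1)) := by positivity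
    calc (ε * U_max / (3 * (Real.log h + 1))) * ∑ k ∈ Finset.range h, (((h - k:ℕ):ℝ))⁻¹
        ≤ (ε * U_max / (3 * (Real.log h + 1))) * (Real.log h + 1) :=
          mul_le_mul_of_nonneg_left hharm hpos.le
      _ = ε * U_max / 3 := by field_simp
  -- conclude
  have hA0 := hA h le_rfl s₀
  have hB0 := hB h le_rfl s₀
  rw [Nat.sub_self] at hA0 hB0
  rw [← Finset.range_eq_Ico] at hB0
  have hεU : ε * U_max ≤ ε * w 0 s₀ := mul_le_mul_of_nonneg_left hwU hε.le
  have hfinal : (1 - ε) * w 0 s₀ = w 0 s₀ - ε * w 0 s₀ := by ring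
  linarith
end
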